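/- Let K be a field of characteristic ≠ 2 and let R = K[x₁,x₂,x₃,y₁,y₂,y₃,z₁,z₂,z₃]. Then f₁ = x₂z₁ + y₃z₁ - x₁z₂ - y₁z₃, f₂ = x₃y₁ - x₁y₃ + x₃z₂ - x₂z₃ + 1, f₃ = x₂y₁ - x₁y₂ - y₃z₂ + y₂z₃ form a regular sequence in R: f₁ is not a zero divisor in R, the class of f₂ is not a zero divisor in R/⟨f₁⟩, and the class of f₃ is not a zero divisor in R/⟨f₁, f₂⟩ (and ⟨f₁,f₂,f₃⟩ ≠ R is not needed beyond these). In particular the ideal ⟨f₁, f₂, f₃⟩ is a complete intersection ideal. -/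

import Mathlib

set_option maxHeartbeats 1000000
set_option synthInstance.maxHeartbeats 400000


open Polynomial in
private lemma cancel_pow' {S : Type*} [CommRing S] [IsDomain S] {c e : S}
    (hc : Prime c) (hce : ¬ c ∣ e) :
    ∀ (n : ℕ) (p : S[X]), (C c * X - C e) ∣ C c ^ n * p → (C c * X - C e) ∣ p := by
  have hCc : Prime (C c : S[X]) := Polynomial.prime_C_iff.mpr hc
  have hnd : ¬ (C c : S[X]) ∣ (C c * X - C e) := by
    intro h
    have h2 : (C c : S[X]) ∣ C e := by
      have := dvd_sub (Dvd.dvd.mul_right (dvd_refl (C c)) X) h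
      simpa using this
    exact hce (by have := (Polynomial.C_dvd_iff_dvd_coeff c (C e)).mp h2 0; simpa using this)
  intro n
  induction n with
  | zero => intro p h; simpa using h
  | succ n ih =>
    intro p h
    obtain ⟨k, hk⟩ := h
    have hck : (C c : S[X]) ∣ (C c * X - C e) * k := ⟨C c ^ n * p, by rw [← hk]; ring⟩
    rcases hCc.2.2 _ _ hck with h1 | h2
    · exact absurd h1 hnd
    · obtain ⟨k', rfl⟩ := h2
      apply ih p
      refine ⟨k', ?_⟩
      have hc0 : (C c : S[X]) ≠ 0 := hCc.1
      apply mul_left_cancel₀ hc0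
      rw [← mul_assoc, ← pow_succ']
      rw [hk]; ring

open Polynomial in
private lemma key_dvd' {S : Type*} [CommRing S] [IsDomain S] {c e : S}
    (hc0 : c ≠ 0) :
    ∀ (n : ℕ) (p : S[X]), p.natDegree ≤ n →
      Polynomial.aeval ((algebraMap S (FractionRing S) e) / (algebraMap S (FractionRing S) c)) p = 0 →
      (C c * X - C e) ∣ C c ^ n * p := by
  set F := FractionRing S
  set φ := algebraMap S F with hφ
  have hinj : Function.Injective φ := IsFractionRing.injective S F
  have hφc : φ c ≠ 0 := fun h => hc0 (hinj (by simpa using h))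
  set t : F := φ e / φ c with ht
  have haevD : Polynomial.aeval t (C c * X - C e) = 0 := by
    simp only [map_sub, map_mul, Polynomial.aeval_C, Polynomial.aeval_X]
    rw [ht, mul_div_cancel₀ _ hφc]
    · simp [hφ]
  intro n
  induction n with
  | zero =>
    intro p hdeg haev
    have : p = C (p.coeff 0) := Polynomial.eq_C_of_natDegree_eq_zero (Nat.le_zero.mp hdeg)
    rw [this] at haev ⊢
    rw [Polynomial.aeval_C] at haev
    have : p.coeff 0 = 0 := by simpa using haev
    simp [this]
  | succ n ih =>
    intro p hdeg haev
    by_cases hdeg' : p.natDegree ≤ n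
    · obtain ⟨k, hk⟩ := ih p hdeg' haev
      exact ⟨C c * k, by rw [pow_succ]; rw [mul_assoc, mul_comm (C c) p, ← mul_assoc, hk]; ring⟩
    · set a := p.coeff (n+1) with ha
      set q : S[X] := C c * p - (C c * X - C e) * (C a * X ^ n) with hq
      have hqdeg : q.natDegree ≤ n := by
        rw [Polynomial.natDegree_le_iff_coeff_eq_zero]
        intro m hm
        have hexp : (C c * X - C e) * (C a * X ^ n) = C (c * a) * X ^ (n+1) - C (e * a) * X ^ n := by
          simp only [Polynomial.C_mul]; ring
        rw [hq, Polynomial.coeff_sub, hexp, Polynomial.coeff_sub, Polynomial.coeff_C_mul,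
          Polynomial.coeff_C_mul, Polynomial.coeff_C_mul, Polynomial.coeff_X_pow,
          Polynomial.coeff_X_pow]
        rcases Nat.lt_or_ge (n+1) m with hm2 | hm2
        · have hc1 : p.coeff m = 0 := Polynomial.coeff_eq_zero_of_natDegree_lt (lt_of_le_of_lt hdeg hm2)
          have hne1 : m ≠ n + 1 := Nat.ne_of_gt hm2
          have hmn : m ≠ n := by omega
          simp [hc1, hne1, hmn]
        · have hm3 : m = n + 1 := le_antisymm hm2 hm
          subst hm3
          have hmn : ¬ (n + 1 = n) := by omega
          simp [ha, hmn, mul_comm]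
      have haevq : Polynomial.aeval t q = 0 := by
        rw [hq]
        simp only [map_sub, map_mul, haev, haevD]
        ring
      obtain ⟨k, hk⟩ := ih q hqdeg haevq
      refine ⟨k + C c ^ n * (C a * X ^ n), ?_⟩
      have hid : C c ^ (n+1) * p = C c ^ n * q + C c ^ n * ((C c * X - C e) * (C a * X ^ n)) := by
        rw [hq]; ring
      rw [hid, hk]; ring

open Polynomial in
private lemma auxL {S : Type*} [CommRing S] [IsDomain S] {c e : S}
    (hc : Prime c) (hce : ¬ c ∣ e) :
    Prime (C c * X - C e : S[X]) := by
  set F := FractionRing S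
  set φ := algebraMap S F with hφ
  have hinj : Function.Injective φ := IsFractionRing.injective S F
  have hc0 : c ≠ 0 := hc.1
  have hφc : φ c ≠ 0 := fun h => hc0 (hinj (by simpa using h))
  set t : F := φ e / φ c with ht
  have haevD : Polynomial.aeval t (C c * X - C e) = 0 := by
    simp only [map_sub, map_mul, Polynomial.aeval_C, Polynomial.aeval_X]
    rw [ht, mul_div_cancel₀ _ hφc]
    · simp [hφ]
  constructor
  · intro h
    have := congrArg (fun p => Polynomial.coeff p 1) h
    simp at this
    exact hc0 this
  constructor
  · intro h
    have hd := Polynomial.degree_eq_zero_of_isUnit h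
    have hcf : (C c * X - C e).coeff 1 = 0 := by
      apply Polynomial.coeff_eq_zero_of_degree_lt
      rw [hd]; exact_mod_cast Nat.zero_lt_one
    simp at hcf
    exact hc0 hcf
  · intro f g hfg
    have h0 : Polynomial.aeval t (f * g) = 0 := by
      obtain ⟨k, hk⟩ := hfg
      rw [hk, map_mul, haevD, zero_mul]
    rw [map_mul, mul_eq_zero] at h0
    rcases h0 with h | h
    · exact Or.inl (cancel_pow' hc hce f.natDegree f (key_dvd' hc0 f.natDegree f le_rfl h))
    · exact Or.inr (cancel_pow' hc hce g.natDegree g (key_dvd' hc0 g.natDegree g le_rfl h))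

open MvPolynomial in
private lemma prime_X_add_X' {A : Type*} [CommRing A] [IsDomain A] {n : ℕ} (i j : Fin (n+1)) (h : i ≠ j) :
    Prime (X i + X j : MvPolynomial (Fin (n+1)) A) := by
  let σ : Fin (n+1) ≃ Fin (n+1) := Equiv.swap i 0
  let E := (renameEquiv A σ).trans (finSuccEquiv A n)
  rw [← MulEquiv.prime_iff E.toMulEquiv]
  have hji : σ j ≠ 0 := by
    intro hc
    apply h
    have := congrArg σ.symm hc
    simpa [σ] using this.symm
  have himg : E (X i + X j) = Polynomial.X + Polynomial.C (X ((σ j).pred hji)) := by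
    show (finSuccEquiv A n) ((rename σ) (X i + X j)) = _
    rw [map_add, rename_X, rename_X]
    have hσi : σ i = 0 := Equiv.swap_apply_left i 0
    rw [hσi]
    rw [map_add, finSuccEquiv_X_zero]
    congr 1
    conv_lhs => rw [show σ j = Fin.succ ((σ j).pred hji) from (Fin.succ_pred _ hji).symm]
    rw [finSuccEquiv_X_succ]
  rw [show E.toMulEquiv (X i + X j) = E (X i + X j) from rfl, himg]
  have hrw : Polynomial.X + Polynomial.C (X ((σ j).pred hji)) =
      Polynomial.X - Polynomial.C (-(X ((σ j).pred hji) : MvPolynomial (Fin n) A)) := by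
    rw [map_neg, sub_neg_eq_add]
  rw [hrw]
  exact Polynomial.prime_X_sub_C _

open MvPolynomial

/-- `R = K[x₁,x₂,x₃,y₁,y₂,y₃,z₁,z₂,z₃]`: the variables `X 0, X 1, X 2` play the roles of
`x₁, x₂, x₃`; `X 3, X 4, X 5` of `y₁, y₂, y₃`; and `X 6, X 7, X 8` of `z₁, z₂, z₃`. -/
noncomputable def poly_f₁ (K : Type*) [Field K] : MvPolynomial (Fin 9) K :=
  X 1 * X 6 + X 5 * X 6 - X 0 * X 7 - X 3 * X 8

noncomputable def poly_f₂ (K : Type*) [Field K] : MvPolynomial (Fin 9) K :=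
  X 2 * X 3 - X 0 * X 5 + X 2 * X 7 - X 1 * X 8 + 1

noncomputable def poly_f₃ (K : Type*) [Field K] : MvPolynomial (Fin 9) K :=
  X 1 * X 3 - X 0 * X 4 - X 5 * X 7 + X 4 * X 8


private def σ9 : Fin 9 ≃ Fin 9 where
  toFun := ![2, 3, 0, 4, 5, 6, 1, 7, 8]
  invFun := ![2, 6, 0, 1, 3, 4, 5, 7, 8]
  left_inv := by decide
  right_inv := by decide

private noncomputable def Emap (K : Type*) [Field K] :
    MvPolynomial (Fin 9) K ≃+* Polynomial (Polynomial (MvPolynomial (Fin 7) K)) :=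
  (renameEquiv K σ9).toRingEquiv.trans ((finSuccEquiv K 8).toRingEquiv.trans
    (Polynomial.mapEquiv (finSuccEquiv K 7).toRingEquiv))

private lemma Emap_X (K : Type*) [Field K] (m : Fin 9) :
    Emap K (X m) = ![Polynomial.C (Polynomial.C (X 0)), Polynomial.C (Polynomial.C (X 1)),
      Polynomial.X, Polynomial.C (Polynomial.C (X 2)), Polynomial.C (Polynomial.C (X 3)),
      Polynomial.C (Polynomial.C (X 4)), Polynomial.C Polynomial.X,
      Polynomial.C (Polynomial.C (X 5)), Polynomial.C (Polynomial.C (X 6))] m := by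
  have step : ∀ m : Fin 9, Emap K (X m) =
      Polynomial.map ((finSuccEquiv K 7).toRingEquiv : MvPolynomial (Fin 8) K →+* Polynomial (MvPolynomial (Fin 7) K))
        ((finSuccEquiv K 8) (X (σ9 m))) := by
    intro m
    show Polynomial.mapEquiv _ ((finSuccEquiv K 8) ((rename σ9) (X m))) = _
    rw [rename_X, Polynomial.mapEquiv_apply]
  have inner : ∀ k : ℕ, ∀ h : k + 1 < 8, ((finSuccEquiv K 7).toRingEquiv : MvPolynomial (Fin 8) K →+* Polynomial (MvPolynomial (Fin 7) K)) (X (⟨k+1, h⟩ : Fin 8)) = Polynomial.C (X ⟨k, by omega⟩) := by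
    intro k h
    show (finSuccEquiv K 7) (X (⟨k+1, h⟩ : Fin 8)) = _
    rw [show (⟨k+1, h⟩ : Fin 8) = Fin.succ ⟨k, by omega⟩ from rfl, finSuccEquiv_X_succ]
  have inner0 : ((finSuccEquiv K 7).toRingEquiv : MvPolynomial (Fin 8) K →+* Polynomial (MvPolynomial (Fin 7) K)) (X (0 : Fin 8)) = Polynomial.X := by
    show (finSuccEquiv K 7) (X (0 : Fin 8)) = _
    exact finSuccEquiv_X_zero
  fin_cases m <;> beta_reduce
  · rw [step, show σ9 ⟨0, by omega⟩ = Fin.succ (⟨1, by omega⟩ : Fin 8) from by decide, finSuccEquiv_X_succ, Polynomial.map_C,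
      inner 0 (by omega)]; rfl
  · rw [step, show σ9 ⟨1, by omega⟩ = Fin.succ (⟨2, by omega⟩ : Fin 8) from by decide, finSuccEquiv_X_succ, Polynomial.map_C,
      inner 1 (by omega)]; rfl
  · rw [step, show σ9 ⟨2, by omega⟩ = (0 : Fin 9) from by decide, finSuccEquiv_X_zero, Polynomial.map_X]; rfl
  · rw [step, show σ9 ⟨3, by omega⟩ = Fin.succ (⟨3, by omega⟩ : Fin 8) from by decide, finSuccEquiv_X_succ, Polynomial.map_C,
      inner 2 (by omega)]; rfl
  · rw [step, show σ9 ⟨4, by omega⟩ = Fin.succ (⟨4, by omega⟩ : Fin 8) from by decide, finSuccEquiv_X_succ, Polynomial.map_C,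
      inner 3 (by omega)]; rfl
  · rw [step, show σ9 ⟨5, by omega⟩ = Fin.succ (⟨5, by omega⟩ : Fin 8) from by decide, finSuccEquiv_X_succ, Polynomial.map_C,
      inner 4 (by omega)]; rfl
  · rw [step, show σ9 ⟨6, by omega⟩ = Fin.succ 0 from by decide, finSuccEquiv_X_succ, Polynomial.map_C, inner0]; rfl
  · rw [step, show σ9 ⟨7, by omega⟩ = Fin.succ (⟨6, by omega⟩ : Fin 8) from by decide, finSuccEquiv_X_succ, Polynomial.map_C,
      inner 5 (by omega)]; rfl
  · rw [step, show σ9 ⟨8, by omega⟩ = Fin.succ (⟨7, by omega⟩ : Fin 8) from by decide, finSuccEquiv_X_succ, Polynomial.map_C,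
      inner 6 (by omega)]; rfl

private lemma Emap_X0 (K : Type*) [Field K] : Emap K (X 0) = (Polynomial.C (Polynomial.C (X 0)) : Polynomial (Polynomial (MvPolynomial (Fin 7) K))) := by
  rw [Emap_X]; exact rfl

private lemma Emap_X1 (K : Type*) [Field K] : Emap K (X 1) = (Polynomial.C (Polynomial.C (X 1)) : Polynomial (Polynomial (MvPolynomial (Fin 7) K))) := by
  rw [Emap_X]; exact rfl

private lemma Emap_X2 (K : Type*) [Field K] : Emap K (X 2) = (Polynomial.X : Polynomial (Polynomial (MvPolynomial (Fin 7) K))) := by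
  rw [Emap_X]; exact rfl

private lemma Emap_X3 (K : Type*) [Field K] : Emap K (X 3) = (Polynomial.C (Polynomial.C (X 2)) : Polynomial (Polynomial (MvPolynomial (Fin 7) K))) := by
  rw [Emap_X]; exact rfl

private lemma Emap_X4 (K : Type*) [Field K] : Emap K (X 4) = (Polynomial.C (Polynomial.C (X 3)) : Polynomial (Polynomial (MvPolynomial (Fin 7) K))) := by
  rw [Emap_X]; exact rfl

private lemma Emap_X5 (K : Type*) [Field K] : Emap K (X 5) = (Polynomial.C (Polynomial.C (X 4)) : Polynomial (Polynomial (MvPolynomial (Fin 7) K))) := by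
  rw [Emap_X]; exact rfl

private lemma Emap_X6 (K : Type*) [Field K] : Emap K (X 6) = (Polynomial.C Polynomial.X : Polynomial (Polynomial (MvPolynomial (Fin 7) K))) := by
  rw [Emap_X]; exact rfl

private lemma Emap_X7 (K : Type*) [Field K] : Emap K (X 7) = (Polynomial.C (Polynomial.C (X 5)) : Polynomial (Polynomial (MvPolynomial (Fin 7) K))) := by
  rw [Emap_X]; exact rfl

private lemma Emap_X8 (K : Type*) [Field K] : Emap K (X 8) = (Polynomial.C (Polynomial.C (X 6)) : Polynomial (Polynomial (MvPolynomial (Fin 7) K))) := by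
  rw [Emap_X]; exact rfl

section MainProof

variable (K : Type*) [Field K]

private noncomputable def pc₁ : MvPolynomial (Fin 7) K := X 1 + X 4
private noncomputable def pe₁ : MvPolynomial (Fin 7) K := X 0 * X 5 + X 2 * X 6
private noncomputable def pc₂ : MvPolynomial (Fin 7) K := X 2 + X 5
private noncomputable def pe₂ : MvPolynomial (Fin 7) K := X 0 * X 4 + X 1 * X 6 - 1
private noncomputable def pF₁ : Polynomial (MvPolynomial (Fin 7) K) :=
  Polynomial.C (pc₁ K) * Polynomial.X - Polynomial.C (pe₁ K)
private noncomputable def tf₂ : Polynomial (Polynomial (MvPolynomial (Fin 7) K)) :=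
  Polynomial.C (Polynomial.C (pc₂ K)) * Polynomial.X - Polynomial.C (Polynomial.C (pe₂ K))

private lemma hprime_c₁ : Prime (pc₁ K) :=
  prime_X_add_X' (1 : Fin 7) 4 (by decide)

private lemma hnd₁ : ¬ pc₁ K ∣ pe₁ K := by
  rintro ⟨q, hq⟩
  have h := congrArg (eval (![1, 0, 0, 0, 0, 1, 0] : Fin 7 → K)) hq
  simp only [pc₁, pe₁, map_add, map_mul, eval_X,
    show (![1, 0, 0, 0, 0, 1, 0] : Fin 7 → K) 0 = 1 from rfl,
    show (![1, 0, 0, 0, 0, 1, 0] : Fin 7 → K) 1 = 0 from rfl,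
    show (![1, 0, 0, 0, 0, 1, 0] : Fin 7 → K) 2 = 0 from rfl,
    show (![1, 0, 0, 0, 0, 1, 0] : Fin 7 → K) 4 = 0 from rfl,
    show (![1, 0, 0, 0, 0, 1, 0] : Fin 7 → K) 5 = 1 from rfl,
    show (![1, 0, 0, 0, 0, 1, 0] : Fin 7 → K) 6 = 0 from rfl] at h
  simp at h

private lemma hF₁prime : Prime (pF₁ K) := auxL (hprime_c₁ K) (hnd₁ K)

private lemma hIF₁ : (Ideal.span {pF₁ K}).IsPrime :=
  (Ideal.span_singleton_prime (hF₁prime K).ne_zero).mpr (hF₁prime K)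

private noncomputable def E7 : MvPolynomial (Fin 7) K ≃ₐ[K] Polynomial (MvPolynomial (Fin 6) K) :=
  (renameEquiv K (Equiv.swap 2 0)).trans (finSuccEquiv K 6)

private lemma hE7c₂ : E7 K (pc₂ K) =
    Polynomial.X - Polynomial.C (-(X 4 : MvPolynomial (Fin 6) K)) := by
  show (finSuccEquiv K 6) ((rename (Equiv.swap 2 0)) (pc₂ K)) = _
  rw [pc₂, map_add, rename_X, rename_X, map_add,
    show (Equiv.swap (2 : Fin 7) 0) 2 = 0 from by decide,
    show (Equiv.swap (2 : Fin 7) 0) 5 = (5 : Fin 7) from by decide,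
    finSuccEquiv_X_zero,
    show (5 : Fin 7) = Fin.succ (4 : Fin 6) from by decide,
    finSuccEquiv_X_succ, map_neg, sub_neg_eq_add]

private noncomputable def qiso :
    (MvPolynomial (Fin 7) K ⧸ Ideal.span {pc₂ K}) ≃+* MvPolynomial (Fin 6) K :=
  (Ideal.quotientEquiv _
      (Ideal.span {Polynomial.X - Polynomial.C (-(X 4 : MvPolynomial (Fin 6) K))})
      (E7 K).toRingEquiv
      (by rw [Ideal.map_span, Set.image_singleton]
          congr 1
          rw [show ((E7 K).toRingEquiv : MvPolynomial (Fin 7) K →+* Polynomial (MvPolynomial (Fin 6) K)) (pc₂ K)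
              = E7 K (pc₂ K) from rfl, hE7c₂])).trans
    (Polynomial.quotientSpanXSubCAlgEquiv (-(X 4 : MvPolynomial (Fin 6) K))).toRingEquiv

private lemma qiso_mk (p : MvPolynomial (Fin 7) K) :
    qiso K (Ideal.Quotient.mk (Ideal.span {pc₂ K}) p) =
      Polynomial.eval (-(X 4 : MvPolynomial (Fin 6) K)) (E7 K p) := by
  unfold qiso
  rw [RingEquiv.trans_apply, Ideal.quotientEquiv_mk]
  show (Polynomial.quotientSpanXSubCAlgEquiv (-(X 4 : MvPolynomial (Fin 6) K)))
      (Ideal.Quotient.mk _ ((E7 K) p)) = _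
  exact Polynomial.quotientSpanXSubCAlgEquiv_mk _ _

private lemma hQdom : IsDomain (MvPolynomial (Fin 7) K ⧸ Ideal.span {pc₂ K}) :=
  MulEquiv.isDomain (MvPolynomial (Fin 6) K) (qiso K).toMulEquiv

private lemma hρc₁prime :
    Prime (Ideal.Quotient.mk (Ideal.span {pc₂ K}) (pc₁ K)) := by
  rw [← MulEquiv.prime_iff (qiso K).toMulEquiv]
  have : (qiso K).toMulEquiv (Ideal.Quotient.mk (Ideal.span {pc₂ K}) (pc₁ K)) =
      (X 0 + X 3 : MvPolynomial (Fin 6) K) := by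
    show qiso K (Ideal.Quotient.mk _ (pc₁ K)) = _
    rw [qiso_mk]
    have hEc₁ : E7 K (pc₁ K) =
        Polynomial.C (X 0 : MvPolynomial (Fin 6) K) + Polynomial.C (X 3) := by
      show (finSuccEquiv K 6) ((rename (Equiv.swap 2 0)) (pc₁ K)) = _
      rw [pc₁, map_add, rename_X, rename_X, map_add,
        show (Equiv.swap (2 : Fin 7) 0) 1 = (1 : Fin 7) from by decide,
        show (Equiv.swap (2 : Fin 7) 0) 4 = (4 : Fin 7) from by decide,
        show (1 : Fin 7) = Fin.succ (0 : Fin 6) from by decide,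
        show (4 : Fin 7) = Fin.succ (3 : Fin 6) from by decide,
        finSuccEquiv_X_succ, finSuccEquiv_X_succ]
    rw [hEc₁]
    simp
  rw [this]
  exact prime_X_add_X' (0 : Fin 6) 3 (by decide)

private lemma hρnd :
    ¬ (Ideal.Quotient.mk (Ideal.span {pc₂ K}) (pc₁ K)) ∣
      (Ideal.Quotient.mk (Ideal.span {pc₂ K}) (pe₁ K)) := by
  rintro ⟨q', hq'⟩
  obtain ⟨q, rfl⟩ := Ideal.Quotient.mk_surjective q'
  rw [← map_mul, ← sub_eq_zero, ← map_sub, Ideal.Quotient.eq_zero_iff_mem,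
    Ideal.mem_span_singleton] at hq'
  obtain ⟨s, hs⟩ := hq'
  have h := congrArg (eval (![0, 0, 1, 0, 0, -1, 1] : Fin 7 → K)) hs
  simp only [pc₁, pc₂, pe₁, map_add, map_sub, map_mul, eval_X,
    show (![0, 0, 1, 0, 0, -1, 1] : Fin 7 → K) 0 = 0 from rfl,
    show (![0, 0, 1, 0, 0, -1, 1] : Fin 7 → K) 1 = 0 from rfl,
    show (![0, 0, 1, 0, 0, -1, 1] : Fin 7 → K) 2 = 1 from rfl,
    show (![0, 0, 1, 0, 0, -1, 1] : Fin 7 → K) 4 = 0 from rfl,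
    show (![0, 0, 1, 0, 0, -1, 1] : Fin 7 → K) 5 = -1 from rfl,
    show (![0, 0, 1, 0, 0, -1, 1] : Fin 7 → K) 6 = 1 from rfl] at h
  simp at h

private lemma hP1 :
    (Ideal.span {pF₁ K, Polynomial.C (pc₂ K)} :
      Ideal (Polynomial (MvPolynomial (Fin 7) K))).IsPrime := by
  haveI := hQdom K
  set ρ := Ideal.Quotient.mk (Ideal.span {pc₂ K})
  set μ := Polynomial.mapRingHom ρ
  have hsurj : Function.Surjective μ := by
    rw [show (μ : Polynomial (MvPolynomial (Fin 7) K) → _) = Polynomial.map ρ from rfl]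
    exact Polynomial.map_surjective _ Ideal.Quotient.mk_surjective
  have hker : RingHom.ker μ = Ideal.span {Polynomial.C (pc₂ K)} := by
    rw [Polynomial.ker_mapRingHom, Ideal.mk_ker, Ideal.map_span, Set.image_singleton]
  have hμF₁ : μ (pF₁ K) = Polynomial.C (ρ (pc₁ K)) * Polynomial.X - Polynomial.C (ρ (pe₁ K)) := by
    simp [pF₁, μ]
  have hprime_img : Prime (μ (pF₁ K)) := by
    rw [hμF₁]; exact auxL (hρc₁prime K) (hρnd K)
  have hμc₂ : μ (Polynomial.C (pc₂ K)) = 0 := by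
    have : ρ (pc₂ K) = 0 := by
      rw [Ideal.Quotient.eq_zero_iff_mem]
      exact Ideal.subset_span rfl
    simp [μ, this]
  have hmap : Ideal.map μ (Ideal.span {pF₁ K, Polynomial.C (pc₂ K)}) =
      Ideal.span {μ (pF₁ K)} := by
    rw [Ideal.map_span, Set.image_pair, hμc₂, Set.pair_comm]
    exact Submodule.span_insert_zero
  have heq : Ideal.span {pF₁ K, Polynomial.C (pc₂ K)} =
      Ideal.comap μ (Ideal.span {μ (pF₁ K)}) := by
    rw [← hmap, Ideal.comap_map_of_surjective' μ hsurj, hker]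
    exact (sup_eq_left.mpr (Ideal.span_mono (Set.singleton_subset_iff.mpr
      (Set.mem_insert_of_mem _ (Set.mem_singleton _))))).symm
  rw [heq]
  haveI : (Ideal.span {μ (pF₁ K)}).IsPrime :=
    (Ideal.span_singleton_prime hprime_img.ne_zero).mpr hprime_img
  exact Ideal.IsPrime.comap _

private lemma hπc₂ne :
    Ideal.Quotient.mk (Ideal.span {pF₁ K}) (Polynomial.C (pc₂ K)) ≠ 0 := by
  rw [Ne, Ideal.Quotient.eq_zero_iff_mem, Ideal.mem_span_singleton]
  rintro ⟨s, hs⟩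
  have h1 := congrArg (Polynomial.eval (0 : MvPolynomial (Fin 7) K)) hs
  simp only [pF₁, Polynomial.eval_mul, Polynomial.eval_sub, Polynomial.eval_C,
    Polynomial.eval_X, mul_zero, zero_sub] at h1
  have h2 := congrArg (eval (![0, 0, 1, 0, 0, 0, 0] : Fin 7 → K)) h1
  simp only [pc₂, pe₁, map_add, map_mul, map_neg, map_sub, map_zero, map_one, eval_X,
    show (![0, 0, 1, 0, 0, 0, 0] : Fin 7 → K) 0 = 0 from rfl,
    show (![0, 0, 1, 0, 0, 0, 0] : Fin 7 → K) 2 = 1 from rfl,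
    show (![0, 0, 1, 0, 0, 0, 0] : Fin 7 → K) 5 = 0 from rfl,
    show (![0, 0, 1, 0, 0, 0, 0] : Fin 7 → K) 6 = 0 from rfl] at h2
  simp at h2

private lemma hπc₂prime :
    Prime (Ideal.Quotient.mk (Ideal.span {pF₁ K}) (Polynomial.C (pc₂ K))) := by
  set π := Ideal.Quotient.mk (Ideal.span {pF₁ K})
  have hπF₁ : π (pF₁ K) = 0 := by
    rw [Ideal.Quotient.eq_zero_iff_mem]; exact Ideal.subset_span rfl
  have hspan : Ideal.span {π (Polynomial.C (pc₂ K))} =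
      Ideal.map π (Ideal.span {pF₁ K, Polynomial.C (pc₂ K)}) := by
    rw [Ideal.map_span, Set.image_pair, hπF₁]
    exact (Submodule.span_insert_zero).symm
  refine (Ideal.span_singleton_prime (hπc₂ne K)).mp ?_
  rw [hspan]
  haveI := hP1 K
  exact Ideal.map_isPrime_of_surjective Ideal.Quotient.mk_surjective
    (by rw [Ideal.mk_ker]
        exact Ideal.span_mono (Set.singleton_subset_iff.mpr (Set.mem_insert _ _)))

private lemma hd3 :
    ¬ (Ideal.Quotient.mk (Ideal.span {pF₁ K}) (Polynomial.C (pc₂ K))) ∣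
      (Ideal.Quotient.mk (Ideal.span {pF₁ K}) (Polynomial.C (pe₂ K))) := by
  rintro ⟨q', hq'⟩
  obtain ⟨q, rfl⟩ := Ideal.Quotient.mk_surjective q'
  rw [← map_mul, ← sub_eq_zero, ← map_sub, Ideal.Quotient.eq_zero_iff_mem,
    Ideal.mem_span_singleton] at hq'
  obtain ⟨s, hs⟩ := hq'
  have h1 := congrArg (Polynomial.eval (0 : MvPolynomial (Fin 7) K)) hs
  simp only [pF₁, Polynomial.eval_mul, Polynomial.eval_sub, Polynomial.eval_C,
    Polynomial.eval_X, mul_zero, zero_sub] at h1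
  have h2 := congrArg (eval (fun _ => (0 : K))) h1
  simp only [pc₂, pe₁, pe₂, map_add, map_mul, map_neg, map_sub, map_zero, map_one,
    eval_X, mul_zero, zero_mul, add_zero, zero_add, zero_sub, neg_zero] at h2
  simp at h2

private lemma hP2T :
    (Ideal.span {Polynomial.C (pF₁ K), tf₂ K} :
      Ideal (Polynomial (Polynomial (MvPolynomial (Fin 7) K)))).IsPrime := by
  haveI := hIF₁ K
  set π := Ideal.Quotient.mk (Ideal.span {pF₁ K})
  set Θ := Polynomial.mapRingHom π
  have hsurj : Function.Surjective Θ := by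
    rw [show (Θ : Polynomial (Polynomial (MvPolynomial (Fin 7) K)) → _) = Polynomial.map π from rfl]
    exact Polynomial.map_surjective _ Ideal.Quotient.mk_surjective
  have hker : RingHom.ker Θ = Ideal.span {Polynomial.C (pF₁ K)} := by
    rw [Polynomial.ker_mapRingHom, Ideal.mk_ker, Ideal.map_span, Set.image_singleton]
  have hπF₁ : π (pF₁ K) = 0 := by
    rw [Ideal.Quotient.eq_zero_iff_mem]; exact Ideal.subset_span rfl
  have hΘf₁ : Θ (Polynomial.C (pF₁ K)) = 0 := by simp [Θ, hπF₁]
  have hΘf₂ : Θ (tf₂ K) =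
      Polynomial.C (π (Polynomial.C (pc₂ K))) * Polynomial.X -
        Polynomial.C (π (Polynomial.C (pe₂ K))) := by
    simp [Θ, tf₂]
  letI : CommRing (Polynomial (MvPolynomial (Fin 7) K) ⧸ Ideal.span {pF₁ K}) := Ideal.Quotient.commRing _
  have hprime_img : Prime (Θ (tf₂ K)) := by
    rw [hΘf₂]; exact auxL (hπc₂prime K) (hd3 K)
  have hmap : Ideal.map Θ (Ideal.span {Polynomial.C (pF₁ K), tf₂ K}) =
      Ideal.span {Θ (tf₂ K)} := by
    rw [Ideal.map_span, Set.image_pair, hΘf₁]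
    exact Submodule.span_insert_zero
  have heq : Ideal.span {Polynomial.C (pF₁ K), tf₂ K} =
      Ideal.comap Θ (Ideal.span {Θ (tf₂ K)}) := by
    rw [← hmap, Ideal.comap_map_of_surjective' Θ hsurj, hker]
    exact (sup_eq_left.mpr (Ideal.span_mono (Set.singleton_subset_iff.mpr
      (Set.mem_insert _ _)))).symm
  rw [heq]
  haveI : (Ideal.span {Θ (tf₂ K)}).IsPrime :=
    (Ideal.span_singleton_prime hprime_img.ne_zero).mpr hprime_img
  exact Ideal.IsPrime.comap _

private lemma hE1 : Emap K (poly_f₁ K) = Polynomial.C (pF₁ K) := by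
  simp only [poly_f₁, pF₁, pc₁, pe₁, map_add, map_sub, map_mul, map_one,
    Emap_X0, Emap_X1, Emap_X2, Emap_X3, Emap_X4, Emap_X5, Emap_X6, Emap_X7, Emap_X8]
  ring

private lemma hE2 : Emap K (poly_f₂ K) = tf₂ K := by
  simp only [poly_f₂, tf₂, pc₂, pe₂, map_add, map_sub, map_mul, map_one,
    Emap_X0, Emap_X1, Emap_X2, Emap_X3, Emap_X4, Emap_X5, Emap_X6, Emap_X7, Emap_X8]
  ring

private lemma hf₁prime : Prime (poly_f₁ K) := by
  rw [← MulEquiv.prime_iff (M := MvPolynomial (Fin 9) K) (N := Polynomial (Polynomial (MvPolynomial (Fin 7) K))) (Emap K).toMulEquiv,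
    show (Emap K).toMulEquiv (poly_f₁ K) = Emap K (poly_f₁ K) from rfl, hE1,
    Polynomial.prime_C_iff]
  exact hF₁prime K

private lemma hP1R : (Ideal.span {poly_f₁ K}).IsPrime :=
  (Ideal.span_singleton_prime (hf₁prime K).ne_zero).mpr (hf₁prime K)

private lemma hP2R : (Ideal.span {poly_f₁ K, poly_f₂ K}).IsPrime := by
  set Φ := ((Emap K) : MvPolynomial (Fin 9) K →+* Polynomial (Polynomial (MvPolynomial (Fin 7) K)))
  have hmap : Ideal.map Φ (Ideal.span {poly_f₁ K, poly_f₂ K}) =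
      Ideal.span {Polynomial.C (pF₁ K), tf₂ K} := by
    rw [Ideal.map_span, Set.image_pair,
      show Φ (poly_f₁ K) = Emap K (poly_f₁ K) from rfl,
      show Φ (poly_f₂ K) = Emap K (poly_f₂ K) from rfl, hE1, hE2]
  have hsurjΦ : Function.Surjective ⇑Φ := fun y => (Emap K).surjective y
  have hker : RingHom.ker Φ = ⊥ := RingHom.ker_coe_equiv (Emap K)
  have heq : Ideal.span {poly_f₁ K, poly_f₂ K} =
      Ideal.comap Φ (Ideal.span {Polynomial.C (pF₁ K), tf₂ K}) := by
    rw [← hmap, Ideal.comap_map_of_surjective' Φ hsurjΦ, hker, sup_bot_eq]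
  rw [heq]
  haveI := hP2T K
  exact Ideal.IsPrime.comap _

private lemma hf₂notin : poly_f₂ K ∉ Ideal.span {poly_f₁ K} := by
  rw [Ideal.mem_span_singleton]
  rintro ⟨s, hs⟩
  have h := congrArg (eval (fun _ => (0 : K))) hs
  simp only [poly_f₁, poly_f₂, map_add, map_sub, map_mul, map_one, eval_X] at h
  simp at h

private lemma hf₃notin : poly_f₃ K ∉ Ideal.span {poly_f₁ K, poly_f₂ K} := by
  intro hmem
  rw [Ideal.mem_span_pair] at hmem
  obtain ⟨a, b, hab⟩ := hmem
  have h := congrArg (eval (![0, 1, 0, 0, 1, 0, 0, 0, 1] : Fin 9 → K)) hab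
  simp only [poly_f₁, poly_f₂, poly_f₃, map_add, map_sub, map_mul, map_one, eval_X,
    show (![0, 1, 0, 0, 1, 0, 0, 0, 1] : Fin 9 → K) 0 = 0 from rfl,
    show (![0, 1, 0, 0, 1, 0, 0, 0, 1] : Fin 9 → K) 1 = 1 from rfl,
    show (![0, 1, 0, 0, 1, 0, 0, 0, 1] : Fin 9 → K) 2 = 0 from rfl,
    show (![0, 1, 0, 0, 1, 0, 0, 0, 1] : Fin 9 → K) 3 = 0 from rfl,
    show (![0, 1, 0, 0, 1, 0, 0, 0, 1] : Fin 9 → K) 4 = 1 from rfl,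
    show (![0, 1, 0, 0, 1, 0, 0, 0, 1] : Fin 9 → K) 5 = 0 from rfl,
    show (![0, 1, 0, 0, 1, 0, 0, 0, 1] : Fin 9 → K) 6 = 0 from rfl,
    show (![0, 1, 0, 0, 1, 0, 0, 0, 1] : Fin 9 → K) 7 = 0 from rfl,
    show (![0, 1, 0, 0, 1, 0, 0, 0, 1] : Fin 9 → K) 8 = 1 from rfl] at h
  simp at h

end MainProof

/-- `f₁, f₂, f₃` is a regular sequence in `R`: `f₁` is not a zero
divisor in `R`, the class of `f₂` is not a zero divisor in `R/⟨f₁⟩`, and the class of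
`f₃` is not a zero divisor in `R/⟨f₁, f₂⟩`.  In particular `⟨f₁, f₂, f₃⟩` is a
complete intersection ideal. -/
theorem f₁_f₂_f₃_regular_sequence
    (K : Type*) [Field K] (hchar : (2 : K) ≠ 0) :
    (∀ r : MvPolynomial (Fin 9) K, poly_f₁ K * r = 0 → r = 0) ∧
    (∀ r : MvPolynomial (Fin 9) K,
        poly_f₂ K * r ∈ Ideal.span {poly_f₁ K} → r ∈ Ideal.span {poly_f₁ K}) ∧
    (∀ r : MvPolynomial (Fin 9) K,
        poly_f₃ K * r ∈ Ideal.span {poly_f₁ K, poly_f₂ K} →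
          r ∈ Ideal.span {poly_f₁ K, poly_f₂ K}) := by
  refine ⟨?_, ?_, ?_⟩
  · intro r h
    rcases mul_eq_zero.mp h with h1 | h2
    · exact absurd h1 (hf₁prime K).ne_zero
    · exact h2
  · intro r h
    rcases (hP1R K).mem_or_mem h with h1 | h2
    · exact absurd h1 (hf₂notin K)
    · exact h2
  · intro r h
    rcases (hP2R K).mem_or_mem h with h1 | h2
    · exact absurd h1 (hf₃notin K)
    · exact h2
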